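/- If 𝒜 ∈ U(p,q), then 𝒜* ∈ U(p,q) (equivalently 𝒜 I_{p,q} 𝒜* = I_{p,q}), 𝒜*𝒜 ∈ U(p,q), and the unique positive definite square root √(𝒜*𝒜) of 𝒜*𝒜 also lies in U(p,q), i.e. √(𝒜*𝒜)* I_{p,q} √(𝒜*𝒜) = I_{p,q}. -/

import Mathlib

open Matrix
open scoped ComplexOrder

/-- The matrix I_{p,q} = diag(I_p, −I_q) defining the indefinite Hermitian form of
signature (p,q). -/
def Ipq (p q : ℕ) : Matrix (Fin p ⊕ Fin q) (Fin p ⊕ Fin q) ℂ :=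
  Matrix.fromBlocks 1 0 0 (-1)

lemma Ipq_hermitian (p q : ℕ) : (Ipq p q)ᴴ = Ipq p q := by
  simp [Ipq, fromBlocks_conjTranspose]

lemma Ipq_sq (p q : ℕ) : Ipq p q * Ipq p q = 1 := by
  simp [Ipq, fromBlocks_multiply, ← fromBlocks_one]

/-- If 𝒜 ∈ U(p,q), then 𝒜* ∈ U(p,q) (equivalently 𝒜 I_{p,q} 𝒜* = I_{p,q}),
𝒜*𝒜 ∈ U(p,q), and the unique positive definite square root √(𝒜*𝒜) of 𝒜*𝒜 (encoded by
`hS : S.PosDef` and `hSS : S * S = 𝒜ᴴ * 𝒜`) also lies in U(p,q). -/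
theorem indefinite_unitary_closed_under_star_and_sqrt {p q : ℕ} (hp : 1 ≤ p) (hq : 1 ≤ q)
    (𝒜 : Matrix (Fin p ⊕ Fin q) (Fin p ⊕ Fin q) ℂ)
    (h𝒜 : 𝒜ᴴ * Ipq p q * 𝒜 = Ipq p q) :
    (𝒜ᴴ)ᴴ * Ipq p q * 𝒜ᴴ = Ipq p q ∧
    𝒜 * Ipq p q * 𝒜ᴴ = Ipq p q ∧
    (𝒜ᴴ * 𝒜)ᴴ * Ipq p q * (𝒜ᴴ * 𝒜) = Ipq p q ∧
    ∀ S : Matrix (Fin p ⊕ Fin q) (Fin p ⊕ Fin q) ℂ, S.PosDef → S * S = 𝒜ᴴ * 𝒜 →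
      Sᴴ * Ipq p q * S = Ipq p q := by
  set J := Ipq p q with hJdef
  have hJH : Jᴴ = J := Ipq_hermitian p q
  have hJ2 : J * J = 1 := Ipq_sq p q
  -- left inverse of 𝒜
  have hleft : (J * 𝒜ᴴ * J) * 𝒜 = 1 := by
    calc (J * 𝒜ᴴ * J) * 𝒜 = J * (𝒜ᴴ * J * 𝒜) := by noncomm_ring
    _ = J * J := by rw [h𝒜]
    _ = 1 := hJ2
  have hright : 𝒜 * (J * 𝒜ᴴ * J) = 1 := mul_eq_one_comm.mp hleft
  have h2 : 𝒜 * J * 𝒜ᴴ = J := by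
    have : 𝒜 * (J * 𝒜ᴴ * J) * J = 1 * J := by rw [hright]
    calc 𝒜 * J * 𝒜ᴴ = 𝒜 * J * 𝒜ᴴ * (J * J) := by rw [hJ2]; noncomm_ring
    _ = 𝒜 * (J * 𝒜ᴴ * J) * J := by noncomm_ring
    _ = 1 * J := this
    _ = J := one_mul J
  have h3 : (𝒜ᴴ * 𝒜)ᴴ * J * (𝒜ᴴ * 𝒜) = J := by
    calc (𝒜ᴴ * 𝒜)ᴴ * J * (𝒜ᴴ * 𝒜) = 𝒜ᴴ * (𝒜 * J * 𝒜ᴴ) * 𝒜 := by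
          rw [conjTranspose_mul, conjTranspose_conjTranspose]; noncomm_ring
    _ = 𝒜ᴴ * J * 𝒜 := by rw [h2]
    _ = J := h𝒜
  refine ⟨by rw [conjTranspose_conjTranspose]; exact h2, h2, h3, ?_⟩
  intro S hS hSS
  have hBJB : (𝒜ᴴ * 𝒜) * J * (𝒜ᴴ * 𝒜) = J := by
    have hBH : (𝒜ᴴ * 𝒜)ᴴ = 𝒜ᴴ * 𝒜 := by
      rw [conjTranspose_mul, conjTranspose_conjTranspose]
    rw [hBH] at h3; exact h3
  -- J * B * J is the right inverse of B
  have hBinv : (𝒜ᴴ * 𝒜)⁻¹ = J * (𝒜ᴴ * 𝒜) * J := by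
    apply Matrix.inv_eq_right_inv
    calc (𝒜ᴴ * 𝒜) * (J * (𝒜ᴴ * 𝒜) * J) = ((𝒜ᴴ * 𝒜) * J * (𝒜ᴴ * 𝒜)) * J := by noncomm_ring
    _ = J * J := by rw [hBJB]
    _ = 1 := hJ2
  have hSinv_sq : (S⁻¹) ^ 2 = (J * S * J) ^ 2 := by
    have h1 : (S⁻¹) ^ 2 = (𝒜ᴴ * 𝒜)⁻¹ := by
      rw [sq, ← Matrix.mul_inv_rev, hSS]
    have h2' : (J * S * J) ^ 2 = J * (𝒜ᴴ * 𝒜) * J := by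
      calc (J * S * J) ^ 2 = J * S * (J * J) * S * J := by rw [sq]; noncomm_ring
      _ = J * (S * S) * J := by rw [hJ2]; noncomm_ring
      _ = J * (𝒜ᴴ * 𝒜) * J := by rw [hSS]
    rw [h1, h2', hBinv]
  have hJSJ_psd : (J * S * J).PosSemidef := by
    have := hS.posSemidef.conjTranspose_mul_mul_same J
    rwa [hJH] at this
  have hkey : S⁻¹ = J * S * J :=
    by open scoped MatrixOrder in exact (CFC.sq_eq_sq_iff _ _ hS.inv.posSemidef.nonneg hJSJ_psd.nonneg).mp hSinv_sq
  have hSJSJ : S * (J * S * J) = 1 := by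
    rw [← hkey]
    exact Matrix.mul_nonsing_inv S ((Matrix.isUnit_iff_isUnit_det S).mp hS.isUnit)
  have hfin : S * J * S = J := by
    calc S * J * S = S * J * S * (J * J) := by rw [hJ2]; noncomm_ring
    _ = (S * (J * S * J)) * J := by noncomm_ring
    _ = 1 * J := by rw [hSJSJ]
    _ = J := one_mul J
  rw [hS.isHermitian.eq]
  exact hfin
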